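/- Let r ≥ 1 and n ≥ 1 with rn ≥ 1. For each k with 1 ≤ k ≤ (r+1)n−1, the number of paths p in 𝒫(n,r,−1) such that exactly k of the vertices s_0, s_1, …, s_{(r+1)n−2} satisfy s_i ≥ 0 equals (1/((r+1)n−1))·C((r+1)n−1, n). -/

import Mathlib

open Finset

def psum {N : ℕ} (p : Fin N → ℤ) (m : ℕ) : ℤ :=
  ∑ j ∈ Finset.univ.filter (fun j : Fin N => (j : ℕ) < m), p j

open Fin.NatCast

namespace CF
variable {N : ℕ} [NeZero N]

/-- periodic extension -/
def ext (p : Fin N → ℤ) (i : ℕ) : ℤ := p i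

/-- partial sums of the periodic extension -/
def SS (p : Fin N → ℤ) (m : ℕ) : ℤ := ∑ i ∈ Finset.range m, ext p i

lemma ext_mod (p : Fin N → ℤ) (i : ℕ) : ext p (i % N) = ext p i := by
  simp only [ext]; congr 1; apply Fin.ext; rw [Fin.val_natCast, Fin.val_natCast, Nat.mod_mod]

lemma ext_add_N (p : Fin N → ℤ) (i : ℕ) : ext p (i + N) = ext p i := by
  rw [← ext_mod p (i + N), Nat.add_mod_right, ext_mod]

lemma psum_eq_SS (p : Fin N → ℤ) (m : ℕ) (hm : m ≤ N) : psum p m = SS p m := by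
  rw [psum, SS]
  refine Finset.sum_nbij' (fun i => (i : ℕ)) (fun i => (i : Fin N)) ?_ ?_ ?_ ?_ ?_
  · intro a ha; simp at ha ⊢; omega
  · intro a ha; simp at ha ⊢
    rwa [Nat.mod_eq_of_lt (by omega)]
  · intro a ha; simp
  · intro a ha; simp at ha
    show (((a : Fin N)) : ℕ) = a
    rw [Fin.val_natCast]
    exact Nat.mod_eq_of_lt (by omega)
  · intro a ha; simp at ha
    simp [ext, Fin.cast_val_eq_self]

lemma SS_add (p : Fin N → ℤ) (j m : ℕ) :
    SS p (j + m) = SS p j + ∑ i ∈ Finset.range m, ext p (j + i) := by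
  induction m with
  | zero => simp
  | succ m ih => rw [← Nat.add_assoc, SS, Finset.sum_range_succ, ← SS, ih,
      Finset.sum_range_succ]; ring

lemma window_sum (p : Fin N → ℤ) (m : ℕ) :
    ∑ i ∈ Finset.range N, ext p (m + i) = ∑ i, p i := by
  induction m with
  | zero =>
    simp only [Nat.zero_add]
    rw [← Fin.sum_univ_eq_sum_range (fun i => ext p i) N]
    exact Finset.sum_congr rfl fun i _ => by rw [ext, Fin.cast_val_eq_self]
  | succ m ih =>
    rw [← ih]
    obtain ⟨M, hM⟩ : ∃ M, N = M + 1 := ⟨N - 1, by have := NeZero.pos N; omega⟩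
    subst hM
    rw [Finset.sum_range_succ, Finset.sum_range_succ' (fun i => ext p (m + i)) M]
    have h1 : ∀ i : ℕ, m + 1 + i = m + (i + 1) := fun i => by omega
    simp only [h1]
    rw [ext_add_N p m]
    simp

lemma SS_N_add (p : Fin N → ℤ) (hp : ∑ i, p i = -1) (m : ℕ) :
    SS p (m + N) = SS p m - 1 := by
  rw [SS_add, window_sum, hp]; ring

end CF

namespace CF
variable {N : ℕ} [NeZero N]

def rotZ (j : ℕ) (p : Fin N → ℤ) : Fin N → ℤ := fun i => ext p ((i : ℕ) + j)

lemma ext_rotZ (j : ℕ) (p : Fin N → ℤ) (i : ℕ) :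
    ext (rotZ j p) i = ext p (i + j) := by
  show rotZ j p (i : Fin N) = ext p (i + j)
  rw [rotZ]
  show ext p (((i : Fin N) : ℕ) + j) = ext p (i + j)
  rw [Fin.val_natCast, ← ext_mod p (i % N + j), Nat.mod_add_mod, ext_mod]

lemma psum_rotZ (j m : ℕ) (hm : m ≤ N) (p : Fin N → ℤ) :
    psum (rotZ j p) m = SS p (j + m) - SS p j := by
  rw [psum_eq_SS _ m hm, SS, SS_add p j m]
  simp only [ext_rotZ]
  have : ∀ i : ℕ, i + j = j + i := fun i => Nat.add_comm i j
  simp only [this]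
  ring

/-- number of nonnegative partial sums among `s_0, ..., s_{N-1}` -/
def FF (q : Fin N → ℤ) : ℕ := ((Finset.range N).filter (fun m => 0 ≤ psum q m)).card

/-- rank statistic -/
def gg (p : Fin N → ℤ) (j : ℕ) : ℕ :=
  ((Finset.range N).filter (fun i => SS p j < SS p i ∨ (SS p i = SS p j ∧ j ≤ i))).card

lemma FF_rotZ (p : Fin N → ℤ) (hp : ∑ i, p i = -1) (j : ℕ) (hj : j < N) :
    FF (rotZ j p) = gg p j := by
  have h0 : FF (rotZ j p)
      = ((Finset.range N).filter (fun m => SS p j ≤ SS p (j + m))).card := by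
    rw [FF]
    congr 1
    refine Finset.filter_congr fun m hm => ?_
    rw [Finset.mem_range] at hm
    rw [psum_rotZ j m (by omega) p]
    constructor <;> intro h <;> omega
  have h1 : ((Finset.range N).filter (fun m => SS p j ≤ SS p (j + m))).card
      = ((Finset.Ico j (j + N)).filter (fun i => SS p j ≤ SS p i)).card := by
    refine Finset.card_nbij' (fun m => j + m) (fun i => i - j) ?_ ?_ ?_ ?_
    · intro a ha; simp only [Finset.mem_coe, Finset.mem_filter, Finset.mem_range, Finset.mem_Ico] at *
      exact ⟨by omega, ha.2⟩
    · intro a ha; simp only [Finset.mem_coe, Finset.mem_filter, Finset.mem_range, Finset.mem_Ico] at *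
      have : j + (a - j) = a := by omega
      rw [this]
      exact ⟨by omega, ha.2⟩
    · intro a ha; dsimp only; omega
    · intro a ha; simp only [Finset.mem_coe, Finset.mem_filter, Finset.mem_Ico] at ha; dsimp only; omega
  have h3 : ((Finset.Ico N (j + N)).filter (fun i => SS p j ≤ SS p i)).card
      = ((Finset.range j).filter (fun i => SS p j < SS p i)).card := by
    refine Finset.card_nbij' (fun i => i - N) (fun i => i + N) ?_ ?_ ?_ ?_
    · intro a ha; simp only [Finset.mem_coe, Finset.mem_filter, Finset.mem_range, Finset.mem_Ico] at *
      refine ⟨by omega, ?_⟩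
      have he : a - N + N = a := by omega
      have := SS_N_add p hp (a - N)
      rw [he] at this
      omega
    · intro a ha; simp only [Finset.mem_coe, Finset.mem_filter, Finset.mem_range, Finset.mem_Ico] at *
      have := SS_N_add p hp a
      refine ⟨by omega, by omega⟩
    · intro a ha; simp only [Finset.mem_coe, Finset.mem_filter, Finset.mem_Ico] at ha; dsimp only; omega
    · intro a ha; dsimp only; omega
  have h2 : ((Finset.Ico j (j + N)).filter (fun i => SS p j ≤ SS p i)).card
      = ((Finset.Ico j N).filter (fun i => SS p j ≤ SS p i)).card
        + ((Finset.Ico N (j + N)).filter (fun i => SS p j ≤ SS p i)).card := by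
    rw [← Finset.Ico_union_Ico_eq_Ico (le_of_lt hj) (by omega : N ≤ j + N),
      Finset.filter_union]
    exact Finset.card_union_of_disjoint (Finset.disjoint_filter_filter
      (Finset.Ico_disjoint_Ico_consecutive j N (j + N)))
  have h4 : gg p j
      = ((Finset.range j).filter (fun i => SS p j < SS p i)).card
        + ((Finset.Ico j N).filter (fun i => SS p j ≤ SS p i)).card := by
    rw [gg, Finset.range_eq_Ico,
      ← Finset.Ico_union_Ico_eq_Ico (Nat.zero_le j) (le_of_lt hj),
      Finset.filter_union,
      Finset.card_union_of_disjoint (Finset.disjoint_filter_filter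
        (Finset.Ico_disjoint_Ico_consecutive 0 j N))]
    congr 1
    · rw [← Finset.range_eq_Ico]
      refine congrArg _ (Finset.filter_congr fun i hi => ?_)
      rw [Finset.mem_range] at hi
      constructor
      · rintro (h | ⟨h1', h2'⟩); · exact h
        omega
      · intro h; exact Or.inl h
    · refine congrArg _ (Finset.filter_congr fun i hi => ?_)
      rw [Finset.mem_Ico] at hi
      constructor
      · rintro (h | ⟨h1', h2'⟩) <;> omega
      · intro h
        rcases lt_or_eq_of_le h with h' | h'
        · exact Or.inl h'
        · exact Or.inr ⟨h'.symm, hi.1⟩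
  omega

end CF

namespace CF
variable {N : ℕ} [NeZero N]

lemma gg_lt (p : Fin N → ℤ) {j1 j2 : ℕ} (h1 : j1 < N) (h2 : j2 < N)
    (h : SS p j1 < SS p j2 ∨ (SS p j1 = SS p j2 ∧ j1 < j2)) :
    gg p j2 < gg p j1 := by
  apply Finset.card_lt_card
  rw [Finset.ssubset_iff_of_subset]
  · refine ⟨j1, ?_, ?_⟩
    · exact Finset.mem_filter.mpr ⟨Finset.mem_range.mpr h1, Or.inr ⟨rfl, le_refl _⟩⟩
    · simp only [Finset.mem_filter, Finset.mem_range]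
      rintro ⟨-, (hc | ⟨hc1, hc2⟩)⟩
      · rcases h with h | ⟨h, _⟩ <;> omega
      · rcases h with h | ⟨h, h'⟩ <;> omega
  · intro i hi
    simp only [Finset.mem_filter, Finset.mem_range] at hi ⊢
    refine ⟨hi.1, ?_⟩
    rcases hi.2 with hc | ⟨hc1, hc2⟩
    · rcases h with h | ⟨h, _⟩
      · exact Or.inl (by omega)
      · exact Or.inl (by omega)
    · rcases h with h | ⟨h, h'⟩
      · exact Or.inl (by omega)
      · exact Or.inr ⟨by omega, by omega⟩

lemma gg_injOn (p : Fin N → ℤ) {j1 j2 : ℕ} (h1 : j1 < N) (h2 : j2 < N)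
    (h : gg p j1 = gg p j2) : j1 = j2 := by
  by_contra hne
  rcases lt_trichotomy (SS p j1) (SS p j2) with hs | hs | hs
  · exact absurd h (Nat.ne_of_gt (gg_lt p h1 h2 (Or.inl hs)))
  · rcases Nat.lt_or_ge j1 j2 with hj | hj
    · exact absurd h (Nat.ne_of_gt (gg_lt p h1 h2 (Or.inr ⟨hs, hj⟩)))
    · have hj' : j2 < j1 := by omega
      exact absurd h.symm (Nat.ne_of_gt (gg_lt p h2 h1 (Or.inr ⟨hs.symm, hj'⟩)))
  · exact absurd h.symm (Nat.ne_of_gt (gg_lt p h2 h1 (Or.inl hs)))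

lemma gg_pos (p : Fin N → ℤ) {j : ℕ} (hj : j < N) : 1 ≤ gg p j := by
  rw [gg, Nat.one_le_iff_ne_zero, ← Nat.pos_iff_ne_zero, Finset.card_pos]
  exact ⟨j, Finset.mem_filter.mpr ⟨Finset.mem_range.mpr hj, Or.inr ⟨rfl, le_refl _⟩⟩⟩

lemma gg_le (p : Fin N → ℤ) (j : ℕ) : gg p j ≤ N := by
  rw [gg]
  calc _ ≤ (Finset.range N).card := Finset.card_filter_le _ _
  _ = N := Finset.card_range N

lemma gg_count (p : Fin N → ℤ) (k : ℕ) (hk1 : 1 ≤ k) (hk2 : k ≤ N) :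
    ((Finset.range N).filter (fun j => gg p j = k)).card = 1 := by
  have him : (Finset.range N).image (gg p) = Finset.Icc 1 N := by
    apply Finset.eq_of_subset_of_card_le
    · intro x hx
      rw [Finset.mem_image] at hx
      obtain ⟨j, hj, rfl⟩ := hx
      rw [Finset.mem_range] at hj
      rw [Finset.mem_Icc]
      exact ⟨gg_pos p hj, gg_le p j⟩
    · rw [Nat.card_Icc]
      rw [Finset.card_image_of_injOn, Finset.card_range]
      · omega
      · intro a ha b hb hab
        rw [Finset.coe_range, Set.mem_Iio] at ha hb
        exact gg_injOn p ha hb hab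
  have hk : k ∈ (Finset.range N).image (gg p) := by
    rw [him, Finset.mem_Icc]; omega
  rw [Finset.mem_image] at hk
  obtain ⟨j0, hj0, hgj0⟩ := hk
  rw [Finset.mem_range] at hj0
  rw [Finset.card_eq_one]
  refine ⟨j0, Finset.eq_singleton_iff_unique_mem.mpr ⟨?_, ?_⟩⟩
  · exact Finset.mem_filter.mpr ⟨Finset.mem_range.mpr hj0, hgj0⟩
  · intro x hx
    simp only [Finset.mem_filter, Finset.mem_range] at hx
    exact gg_injOn p hx.1 hj0 (hx.2.trans hgj0.symm)

end CF

namespace CF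
variable {N : ℕ} [NeZero N]

def decode (r : ℕ) (b : Fin N → Bool) : Fin N → ℤ := fun i => if b i then 1 else -(r : ℤ)

def rotB (j : ℕ) (b : Fin N → Bool) : Fin N → Bool := fun i => b (((i : ℕ) + j : ℕ) : Fin N)

def cnt (b : Fin N → Bool) : ℕ := (Finset.univ.filter (fun i => b i = true)).card

lemma decode_rotB (r j : ℕ) (b : Fin N → Bool) :
    decode r (rotB j b) = rotZ j (decode r b) := rfl

lemma hmod {i : ℕ} (a b : ℕ) (hi : i < N) (hab : a + b = N) :
    ((i + a) % N + b) % N = i := by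
  rw [Nat.mod_add_mod]
  have h : i + a + b = i + N := by omega
  rw [h, Nat.add_mod_right, Nat.mod_eq_of_lt hi]

lemma finAdd_finAdd (a b : ℕ) (hab : a + b = N) (i : Fin N) :
    ((((((i : ℕ) + a : ℕ) : Fin N) : ℕ) + b : ℕ) : Fin N) = i := by
  apply Fin.ext
  rw [Fin.val_natCast, Fin.val_natCast, hmod a b i.isLt hab]

lemma rotB_rotB (a b : ℕ) (hab : a + b = N) (q : Fin N → Bool) :
    rotB b (rotB a q) = q := by
  funext i
  show q (((((((i : ℕ) + b : ℕ) : Fin N) : ℕ) + a : ℕ) : Fin N)) = q i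
  rw [finAdd_finAdd b a (by omega)]

lemma cnt_rotB (j : ℕ) (hj : j ≤ N) (b : Fin N → Bool) :
    cnt (rotB j b) = cnt b := by
  refine Finset.card_nbij' (fun i => (((i : ℕ) + j : ℕ) : Fin N))
    (fun i => (((i : ℕ) + (N - j) : ℕ) : Fin N)) ?_ ?_ ?_ ?_
  · intro a ha
    simp only [Finset.mem_coe, Finset.mem_filter, Finset.mem_univ, true_and] at ha ⊢
    exact ha
  · intro a ha
    simp only [Finset.mem_coe, Finset.mem_filter, Finset.mem_univ, true_and] at ha ⊢
    show b (((((((a : ℕ) + (N - j) : ℕ) : Fin N) : ℕ) + j : ℕ) : Fin N)) = true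
    rw [finAdd_finAdd (N - j) j (by omega)]
    exact ha
  · intro a _
    exact finAdd_finAdd j (N - j) (by omega) a
  · intro a _
    exact finAdd_finAdd (N - j) j (by omega) a

lemma card_cnt_eq (U : ℕ) :
    ((Finset.univ : Finset (Fin N → Bool)).filter (fun b => cnt b = U)).card
      = Nat.choose N U := by
  have h : ((Finset.univ : Finset (Fin N → Bool)).filter (fun b => cnt b = U)).card
      = (Finset.powersetCard U (Finset.univ : Finset (Fin N))).card := by
    refine Finset.card_nbij' (fun b => Finset.univ.filter (fun i => b i = true))
      (fun s => fun i => decide (i ∈ s)) ?_ ?_ ?_ ?_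
    · intro b hb
      simp only [Finset.mem_coe, Finset.mem_filter, Finset.mem_univ, true_and] at hb
      rw [Finset.mem_coe, Finset.mem_powersetCard]
      exact ⟨Finset.filter_subset _ _ |>.trans (Finset.Subset.refl _) |>.trans
        (by intro x _; exact Finset.mem_univ x), hb⟩
    · intro s hs
      rw [Finset.mem_coe, Finset.mem_powersetCard] at hs
      rw [Finset.mem_coe]
      simp only [Finset.mem_filter, Finset.mem_univ, true_and]
      simp only [cnt]
      rw [show (Finset.univ.filter (fun i => decide (i ∈ s) = true)) = s by
        ext x; simp]
      exact hs.2
    · intro b _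
      funext i
      simp
    · intro s _
      ext x
      simp
  rw [h, Finset.card_powersetCard, Finset.card_univ, Fintype.card_fin]

lemma cnt_le (b : Fin N → Bool) : cnt b ≤ N := by
  rw [cnt]
  calc _ ≤ (Finset.univ : Finset (Fin N)).card := Finset.card_filter_le _ _
  _ = N := by rw [Finset.card_univ, Fintype.card_fin]

lemma sum_decode (r : ℕ) (b : Fin N → Bool) :
    ∑ i, decode r b i = (cnt b : ℤ) - r * ((N : ℤ) - cnt b) := by
  simp only [decode]
  rw [Finset.sum_ite, Finset.sum_const, Finset.sum_const]
  have hcc := Finset.card_filter_add_card_filter_not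
    (s := (Finset.univ : Finset (Fin N))) (p := fun i => b i = true)
  rw [Finset.card_univ, Fintype.card_fin] at hcc
  have h1 : (Finset.univ.filter (fun i => b i = true)).card = cnt b := rfl
  rw [h1] at hcc ⊢
  have hc : (Finset.univ.filter (fun i => ¬ b i = true)).card = N - cnt b := by omega
  rw [hc]
  have hle : cnt b ≤ N := cnt_le b
  rw [nsmul_eq_mul, nsmul_eq_mul]
  push_cast [hle]
  ring

end CF

namespace CF
variable {N : ℕ} [NeZero N]

lemma fiber_card_one (r : ℕ) (b : Fin N → Bool)
    (hsum : ∑ i, decode r b i = -1) (k : ℕ) (hk1 : 1 ≤ k) (hk2 : k ≤ N) :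
    ((Finset.univ : Finset (Fin N)).filter
      (fun j : Fin N => FF (decode r (rotB (j : ℕ) b)) = k)).card = 1 := by
  have key : ∀ j : Fin N, FF (decode r (rotB (j : ℕ) b)) = gg (decode r b) (j : ℕ) := by
    intro j
    rw [decode_rotB, FF_rotZ (decode r b) hsum (j : ℕ) j.isLt]
  have hcard : ((Finset.univ : Finset (Fin N)).filter
      (fun j : Fin N => FF (decode r (rotB (j : ℕ) b)) = k)).card
      = ((Finset.range N).filter (fun j => gg (decode r b) j = k)).card := by
    refine Finset.card_nbij' (fun j => (j : ℕ)) (fun j => (j : Fin N)) ?_ ?_ ?_ ?_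
    · intro a ha
      simp only [Finset.mem_coe, Finset.mem_filter, Finset.mem_univ, true_and, Finset.mem_range] at ha ⊢
      exact ⟨a.isLt, (key a) ▸ ha⟩

    · intro a ha
      simp only [Finset.mem_coe, Finset.mem_filter, Finset.mem_univ, true_and, Finset.mem_range] at ha ⊢
      rw [key]
      rw [Fin.val_natCast, Nat.mod_eq_of_lt ha.1]
      exact ha.2
    · intro a _; exact Fin.cast_val_eq_self a
    · intro a ha
      simp only [Finset.mem_coe, Finset.mem_filter, Finset.mem_range] at ha
      show (((a : Fin N)) : ℕ) = a
      rw [Fin.val_natCast]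
      exact Nat.mod_eq_of_lt ha.1
  rw [hcard]
  exact gg_count (decode r b) k hk1 hk2

lemma count_lemma (r : ℕ) (U k : ℕ)
    (hsum : ∀ b : Fin N → Bool, cnt b = U → ∑ i, decode r b i = -1)
    (hk1 : 1 ≤ k) (hk2 : k ≤ N) :
    ((Finset.univ : Finset (Fin N → Bool)).filter
      (fun b => cnt b = U ∧ FF (decode r b) = k)).card * N = Nat.choose N U := by
  classical
  set S0 := (Finset.univ : Finset (Fin N → Bool)).filter (fun b => cnt b = U) with hS0
  set Bk := (Finset.univ : Finset (Fin N → Bool)).filter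
      (fun b => cnt b = U ∧ FF (decode r b) = k) with hBk
  set T := (S0 ×ˢ (Finset.univ : Finset (Fin N))).filter
      (fun x => FF (decode r (rotB (x.2 : ℕ) x.1)) = k) with hT
  have memT : ∀ x : (Fin N → Bool) × Fin N,
      x ∈ T ↔ cnt x.1 = U ∧ FF (decode r (rotB (x.2 : ℕ) x.1)) = k := by
    intro x
    simp only [hT, hS0, Finset.mem_filter, Finset.mem_product, Finset.mem_univ,
      true_and, and_true]
  -- Count A : T.card = S0.card
  have countA : T.card = S0.card := by
    rw [Finset.card_eq_sum_card_fiberwise (f := Prod.fst) (t := S0)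
      (fun x hx => by rw [Finset.mem_coe, memT] at hx; simp only [Finset.mem_coe, hS0, Finset.mem_filter,
        Finset.mem_univ, true_and]; exact hx.1)]
    rw [Finset.card_eq_sum_ones S0]
    refine Finset.sum_congr rfl fun b hb => ?_
    have hbU : cnt b = U := by
      simpa only [hS0, Finset.mem_filter, Finset.mem_univ, true_and] using hb
    have hfib : (T.filter (fun x => x.1 = b)).card
        = ((Finset.univ : Finset (Fin N)).filter
            (fun j : Fin N => FF (decode r (rotB (j : ℕ) b)) = k)).card := by
      refine Finset.card_nbij' (fun x => x.2) (fun j => (b, j)) ?_ ?_ ?_ ?_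
      · intro a ha
        simp only [Finset.mem_coe, Finset.mem_filter] at ha
        obtain ⟨haT, hab⟩ := ha
        rw [memT] at haT
        simp only [Finset.mem_coe, Finset.mem_filter, Finset.mem_univ, true_and]
        rw [← hab]
        exact haT.2
      · intro a ha
        simp only [Finset.mem_coe, Finset.mem_filter, Finset.mem_univ, true_and] at ha
        simp only [Finset.mem_coe, Finset.mem_filter]
        refine ⟨(memT _).mpr ⟨hbU, ha⟩, ?_⟩
        trivial
      · intro a ha
        simp only [Finset.mem_coe, Finset.mem_filter] at ha
        exact Prod.ext ha.2.symm rfl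
      · intro a _; rfl
    rw [hfib, fiber_card_one r b (hsum b hbU) k hk1 hk2]
  -- Count B : T.card = Bk.card * N
  have countB : T.card = Bk.card * N := by
    have : T.card = (Bk ×ˢ (Finset.univ : Finset (Fin N))).card := by
      refine Finset.card_nbij' (fun x => (rotB (x.2 : ℕ) x.1, x.2))
        (fun x => (rotB (N - (x.2 : ℕ)) x.1, x.2)) ?_ ?_ ?_ ?_
      · intro a ha
        rw [Finset.mem_coe, memT] at ha
        simp only [Finset.mem_coe, Finset.mem_product, Finset.mem_univ, and_true, hBk,
          Finset.mem_filter, true_and]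
        exact ⟨by rw [cnt_rotB (a.2 : ℕ) (le_of_lt a.2.isLt) a.1]; exact ha.1, ha.2⟩
      · intro a ha
        simp only [Finset.mem_coe, Finset.mem_product, Finset.mem_univ, and_true, hBk,
          Finset.mem_filter, true_and] at ha
        rw [Finset.mem_coe, memT]
        constructor
        · rw [cnt_rotB (N - (a.2 : ℕ)) (by omega) a.1]; exact ha.1
        · rw [rotB_rotB (N - (a.2 : ℕ)) (a.2 : ℕ) (by have := a.2.isLt; omega) a.1]
          exact ha.2
      · intro a ha
        rw [Finset.mem_coe, memT] at ha
        have : rotB (N - (a.2 : ℕ)) (rotB (a.2 : ℕ) a.1) = a.1 :=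
          rotB_rotB (a.2 : ℕ) (N - (a.2 : ℕ)) (by have := a.2.isLt; omega) a.1
        exact Prod.ext this rfl
      · intro a ha
        have : rotB (a.2 : ℕ) (rotB (N - (a.2 : ℕ)) a.1) = a.1 :=
          rotB_rotB (N - (a.2 : ℕ)) (a.2 : ℕ) (by have := a.2.isLt; omega) a.1
        exact Prod.ext this rfl
    rw [this, Finset.card_product, Finset.card_univ, Fintype.card_fin]
  rw [← countB, countA, hS0, card_cnt_eq U]

end CF

/-- Among paths in 𝒫(n,r,−1) (steps +1 or −r, with rn−1 up steps and n down steps),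
for each `1 ≤ k ≤ (r+1)n−1` the number with exactly `k` of the vertices
`s_0, …, s_{(r+1)n−2}` on or above the x-axis is `(1/((r+1)n−1))·C((r+1)n−1,n)`. -/
theorem generalized_catalan_chung_feller_neg (r n : ℕ) (hr : 1 ≤ r) (hn : 1 ≤ n)
    (hrn : 1 ≤ r*n) (k : ℕ) (hk1 : 1 ≤ k) (hk2 : k ≤ (r+1)*n - 1) :
    Nat.card {p : Fin ((r+1)*n - 1) → ℤ //
      (∀ i, p i = 1 ∨ p i = -(r : ℤ)) ∧
      (univ.filter (fun i => p i = 1)).card = r*n - 1 ∧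
      (((Finset.range ((r+1)*n - 1)).filter (fun m => 0 ≤ psum p m)).card = k) }
      * ((r+1)*n - 1) = Nat.choose ((r+1)*n - 1) n := by
  classical
  have h2 : 2 ≤ (r+1)*n := by
    have := Nat.mul_le_mul (show 2 ≤ r + 1 by omega) hn
    omega
  have hmul : (r+1)*n = r*n + n := by ring
  obtain ⟨N, hN⟩ : ∃ N, (r+1)*n - 1 = N := ⟨_, rfl⟩
  obtain ⟨U, hU⟩ : ∃ U, r*n - 1 = U := ⟨_, rfl⟩
  rw [hN] at hk2 ⊢
  rw [hU]
  have hN0 : N ≠ 0 := by omega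
  haveI : NeZero N := ⟨hN0⟩
  have hUn : U + n = N := by omega
  have hUN : U ≤ N := by omega
  have hNU : N - U = n := by omega
  have hrZ : (1 : ℤ) ≤ (r : ℤ) := by exact_mod_cast hr
  have hne : -(r : ℤ) ≠ 1 := by omega
  set Bk := (Finset.univ : Finset (Fin N → Bool)).filter
      (fun b => CF.cnt b = U ∧ CF.FF (CF.decode r b) = k) with hBk
  have hcardeq : Nat.card {p : Fin N → ℤ //
      (∀ i, p i = 1 ∨ p i = -(r : ℤ)) ∧
      (univ.filter (fun i => p i = 1)).card = U ∧
      (((Finset.range N).filter (fun m => 0 ≤ psum p m)).card = k) } = Bk.card := by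
    rw [← Nat.card_eq_finsetCard]
    refine Nat.card_congr ?_
    refine ⟨fun p => ⟨fun i => decide (p.1 i = 1), ?_⟩,
      fun b => ⟨CF.decode r b.1, ?_⟩, ?_, ?_⟩
    · obtain ⟨hstep, hcnt, hFF⟩ := p.2
      have hdec : CF.decode r (fun i => decide (p.1 i = 1)) = p.1 := by
        funext i
        rcases hstep i with h | h
        · simp [CF.decode, h]
        · have hd : decide (p.1 i = 1) = false := decide_eq_false (by rw [h]; exact hne)
          show (if decide (p.1 i = 1) = true then (1 : ℤ) else -(r : ℤ)) = p.1 i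
          rw [hd]
          simp [h]
      simp only [hBk, Finset.mem_filter, Finset.mem_univ, true_and]
      refine ⟨?_, by rw [hdec]; exact hFF⟩
      have hcc : CF.cnt (fun i => decide (p.1 i = 1))
          = (univ.filter (fun i => p.1 i = 1)).card := by
        rw [CF.cnt]
        congr 1
        apply Finset.filter_congr
        intro i _
        simp
      rw [hcc]
      exact hcnt
    · have hb := b.2
      simp only [hBk, Finset.mem_filter, Finset.mem_univ, true_and] at hb
      refine ⟨fun i => ?_, ?_, hb.2⟩
      · simp only [CF.decode]
        cases hbi : (b.1 : Fin N → Bool) i <;> simp [hbi]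
      · have hcc : (univ.filter (fun i => CF.decode r b.1 i = 1)).card = CF.cnt b.1 := by
          rw [CF.cnt]
          congr 1
          apply Finset.filter_congr
          intro i _
          simp only [CF.decode]
          cases hbi : (b.1 : Fin N → Bool) i <;> simp [hbi, hne]
        rw [hcc]
        exact hb.1
    · intro p
      apply Subtype.ext
      obtain ⟨hstep, -, -⟩ := p.2
      funext i
      rcases hstep i with h | h
      · simp [CF.decode, h]
      · have hd : decide (p.1 i = 1) = false := decide_eq_false (by rw [h]; exact hne)
        show (if decide (p.1 i = 1) = true then (1 : ℤ) else -(r : ℤ)) = p.1 i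
        rw [hd]
        simp [h]
    · intro b
      apply Subtype.ext
      funext i
      show decide (CF.decode r b.1 i = 1) = b.1 i
      simp only [CF.decode]
      by_cases hbi : (b.1 : Fin N → Bool) i = true
      · simp [hbi]
      · rw [Bool.not_eq_true] at hbi
        simp [hbi, hne]
  rw [hcardeq]
  have hsum : ∀ b : Fin N → Bool, CF.cnt b = U → ∑ i, CF.decode r b i = -1 := by
    intro b hb
    rw [CF.sum_decode r b, hb]
    have h1 : (N : ℤ) = (U : ℤ) + n := by exact_mod_cast hUn.symm
    have h2' : (U : ℤ) = (r : ℤ) * n - 1 := by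
      rw [← hU]
      push_cast [Nat.cast_sub hrn]
      ring
    rw [h1, h2']
    ring
  have hcl := CF.count_lemma (N := N) r U k hsum hk1 hk2
  rw [← hBk] at hcl
  rw [hcl]
  rw [← Nat.choose_symm hUN, hNU]
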